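/- Let G be a graph and let G' be the duplication of G. Then for every nonnegative integer k, G has a dominating set of size at most k if and only if G' admits a Roman dominating function of weight at most 2k. -/

import Mathlib

/-- The duplication `G'` of a graph `G`: the graph on vertex set `V × {1,2}`
(here `V × Bool`) in which `(v,i)` and `(w,j)` are adjacent if and only if either
`i = j` and `vw ∈ E(G)`, or `i ≠ j` and (`v = w` or `vw ∈ E(G)`). -/
def duplication {V : Type*} (G : SimpleGraph V) : SimpleGraph (V × Bool) where
  Adj a b := (a.2 = b.2 ∧ G.Adj a.1 b.1) ∨ (a.2 ≠ b.2 ∧ (a.1 = b.1 ∨ G.Adj a.1 b.1))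
  symm := by
    constructor
    rintro ⟨v, i⟩ ⟨w, j⟩ (⟨h1, h2⟩ | ⟨h1, h2⟩)
    · exact Or.inl ⟨h1.symm, h2.symm⟩
    · exact Or.inr ⟨h1.symm, h2.imp Eq.symm SimpleGraph.Adj.symm⟩
  loopless := by
    constructor
    rintro ⟨v, i⟩ (⟨_, h⟩ | ⟨h, _⟩)
    · exact G.irrefl h
    · exact h rfl


/-- Let `G` be a graph and let `G'` be the duplication of `G`. Then for every
nonnegative integer `k`, `G` has a dominating set of size at most `k` if and only
if `G'` admits a Roman dominating function (a function `f : V(G') → {0,1,2}` such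
that every vertex with value 0 has a neighbor with value 2) of weight at most `2k`. -/
theorem duplication_dominating_iff_roman {V : Type*} [Fintype V]
    (G : SimpleGraph V) (k : ℕ) :
    (∃ D : Set V, (∀ v : V, ∃ u ∈ D, u = v ∨ G.Adj u v) ∧ D.ncard ≤ k) ↔
    (∃ f : V × Bool → ℕ, (∀ a, f a ≤ 2) ∧
      (∀ a, f a = 0 → ∃ b, (duplication G).Adj a b ∧ f b = 2) ∧
      ∑ a : V × Bool, f a ≤ 2 * k) := by
  classical
  constructor
  · rintro ⟨D, hdom, hcard⟩
    refine ⟨fun a => if a.1 ∈ D ∧ a.2 = true then 2 else 0, ?_, ?_, ?_⟩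
    · intro a; dsimp only; split <;> omega
    · intro a ha
      dsimp only at ha
      obtain ⟨u, huD, huv⟩ := hdom a.1
      have h1 : ¬ (a.1 ∈ D ∧ a.2 = true) := by
        intro h; simp only [if_pos h] at ha; omega
      refine ⟨(u, true), ?_, by simp [huD]⟩
      by_cases hb : a.2 = true
      · have hadj : G.Adj u a.1 := by
          rcases huv with rfl | h
          · exact absurd ⟨huD, hb⟩ h1
          · exact h
        exact Or.inl ⟨hb, hadj.symm⟩
      · exact Or.inr ⟨by simp [hb], huv.imp Eq.symm SimpleGraph.Adj.symm⟩
    · have hsum : ∑ a : V × Bool, (if a.1 ∈ D ∧ a.2 = true then 2 else 0)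
          = ∑ v : V, (if v ∈ D then (2:ℕ) else 0) := by
        rw [Fintype.sum_prod_type]
        refine Finset.sum_congr rfl fun v _ => ?_
        rw [Fintype.sum_bool]
        by_cases h : v ∈ D <;> simp [h]
      rw [hsum]
      have h2 : ∑ v : V, (if v ∈ D then (2:ℕ) else 0) = 2 * D.toFinset.card := by
        rw [← Finset.sum_filter, Set.filter_mem_univ_eq_toFinset, Finset.sum_const,
          smul_eq_mul, mul_comm]
      rw [h2]
      rw [Set.ncard_eq_toFinset_card'] at hcard
      omega
  · rintro ⟨f, hf2, hrdf, hsum⟩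
    refine ⟨{v | 2 ≤ f (v, true) + f (v, false)}, ?_, ?_⟩
    · intro v
      by_cases hv : 2 ≤ f (v, true) + f (v, false)
      · exact ⟨v, hv, Or.inl rfl⟩
      · have h0 : f (v, true) = 0 ∨ f (v, false) = 0 := by omega
        obtain ⟨i, hi⟩ : ∃ i, f (v, i) = 0 := by
          rcases h0 with h | h
          exacts [⟨true, h⟩, ⟨false, h⟩]
        obtain ⟨⟨w, j⟩, hadj, hb2⟩ := hrdf (v, i) hi
        refine ⟨w, ?_, ?_⟩
        · show 2 ≤ f (w, true) + f (w, false)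
          cases j
          · have := hf2 (w, true); omega
          · have := hf2 (w, false); omega
        · rcases hadj with ⟨_, h⟩ | ⟨_, h⟩
          · exact Or.inr h.symm
          · exact h.imp Eq.symm SimpleGraph.Adj.symm
    · set D : Set V := {v | 2 ≤ f (v, true) + f (v, false)} with hD
      have key : 2 * D.toFinset.card ≤ ∑ a : V × Bool, f a := by
        rw [Fintype.sum_prod_type]
        calc 2 * D.toFinset.card = ∑ v ∈ D.toFinset, 2 := by
              rw [Finset.sum_const, smul_eq_mul, mul_comm]
          _ ≤ ∑ v ∈ D.toFinset, (f (v, true) + f (v, false)) := by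
              refine Finset.sum_le_sum fun v hv => ?_
              rw [Set.mem_toFinset] at hv
              exact hv
          _ ≤ ∑ v : V, (f (v, true) + f (v, false)) := by
              refine Finset.sum_le_sum_of_subset (Finset.subset_univ _)
          _ = ∑ v : V, ∑ b : Bool, f (v, b) := by
              refine Finset.sum_congr rfl fun v _ => ?_
              rw [Fintype.sum_bool]
          _ = _ := rfl
      rw [Set.ncard_eq_toFinset_card']
      omega
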